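/- arXiv:1703.09523 — 2 statements merged into one kernel-verified Lean document; each statement's English description precedes it below -/
import Mathlib

section
/- Let L be a Hermitian Mackey functor and Mₙ(L) the matrix Hermitian Mackey functor. For the action of Mₙ(L(ℤ/2)) on Mₙ(L)(*), the compatibility with restriction holds: R(A•B) = A·R(B)·w(A) in Mₙ(L(ℤ/2)), where w(A) is the conjugate transpose of A. -/
/-- A Hermitian ℤ/2-Mackey functor: a ring `U = L(ℤ/2)` with anti-involution `w`,
an abelian group `F = L(*)`, restriction `R`, transfer `T` with `R (T a) = a + w a`,
and a multiplicative left action `act` of `U` on `F`. -/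
structure HermitianMackey (U F : Type) [Ring U] [AddCommGroup F] where
  w : U → U
  w_add : ∀ a a' : U, w (a + a') = w a + w a'
  w_invol : ∀ a : U, w (w a) = a
  w_mul : ∀ a a' : U, w (a * a') = w a' * w a
  w_one : w 1 = 1
  R : F → U
  R_add : ∀ b b' : F, R (b + b') = R b + R b'
  R_equiv : ∀ b : F, w (R b) = R b
  T : U → F
  T_add : ∀ a a' : U, T (a + a') = T a + T a'
  T_equiv : ∀ a : U, T (w a) = T a
  RT : ∀ a : U, R (T a) = a + w a
  act : U → F → F
  act_add : ∀ (a : U) (b b' : F), act a (b + b') = act a b + act a b'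
  act_mul : ∀ (a a' : U) (b : F), act (a * a') b = act a (act a' b)
  act_one : ∀ b : F, act 1 b = b
  R_act : ∀ (a : U) (b : F), R (act a b) = a * R b * w a
  act_T : ∀ a c : U, act a (T c) = T (a * c * w a)
  add_act : ∀ (a a' : U) (b : F),
    act (a + a') b = act a b + act a' b + T (a * R b * w a')
  zero_act : ∀ b : F, act 0 b = 0

variable {U F : Type} [Ring U] [AddCommGroup F]

/-- The conjugate transpose `w(A)ᵢⱼ = w(Aⱼᵢ)`, the anti-involution of `Mₙ(L)(ℤ/2)`. -/
def conjT (L : HermitianMackey U F) {n : ℕ} (A : Matrix (Fin n) (Fin n) U) :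
    Matrix (Fin n) (Fin n) U :=
  Matrix.of fun i j => L.w (A j i)

/-- The restriction `R : Mₙ(L)(*) → Mₙ(L(ℤ/2))`. An element of `Mₙ(L)(*)` is
recorded as a pair `(Boff, Bdiag)`: the entries `Boff i j` for `i < j` lie in
`L(ℤ/2)` and the diagonal entries `Bdiag i` lie in `L(*)`; the restriction fills
in the lower entries via the involution `w`. -/
def mRest (L : HermitianMackey U F) {n : ℕ}
    (Boff : Fin n → Fin n → U) (Bdiag : Fin n → F) :
    Matrix (Fin n) (Fin n) U :=
  Matrix.of fun i j =>
    if i < j then Boff i j else if j < i then L.w (Boff j i) else L.R (Bdiag i)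

/-- Off-diagonal part of the matrix transfer `T : Mₙ(L(ℤ/2)) → Mₙ(L)(*)`:
`T(A)ᵢⱼ = Aᵢⱼ + w(Aⱼᵢ)` for `i < j`. -/
def mTransOff (L : HermitianMackey U F) {n : ℕ} (A : Matrix (Fin n) (Fin n) U) :
    Fin n → Fin n → U :=
  fun i j => A i j + L.w (A j i)

/-- Diagonal part of the matrix transfer: `T(A)ᵢᵢ = T(Aᵢᵢ)`. -/
def mTransDiag (L : HermitianMackey U F) {n : ℕ} (A : Matrix (Fin n) (Fin n) U) :
    Fin n → F :=
  fun i => L.T (A i i)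

/-- Off-diagonal part of the action of `Mₙ(L(ℤ/2))` on `Mₙ(L)(*)`:
`(A • B)ᵢⱼ = (A · R(B) · w(A))ᵢⱼ` for `i < j`. -/
def mActOff (L : HermitianMackey U F) {n : ℕ} (A : Matrix (Fin n) (Fin n) U)
    (Boff : Fin n → Fin n → U) (Bdiag : Fin n → F) : Fin n → Fin n → U :=
  fun i j => (A * mRest L Boff Bdiag * conjT L A) i j

/-- Diagonal part of the action of `Mₙ(L(ℤ/2))` on `Mₙ(L)(*)`:
`(A • B)ᵢᵢ = T(Σ_{k<l} Aᵢₖ · R(B)ₖₗ · w(Aᵢₗ)) + Σₖ Aᵢₖ • Bₖₖ`. -/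
def mActDiag (L : HermitianMackey U F) {n : ℕ} (A : Matrix (Fin n) (Fin n) U)
    (Boff : Fin n → Fin n → U) (Bdiag : Fin n → F) : Fin n → F :=
  fun i =>
    (∑ k : Fin n, ∑ l : Fin n,
        if k < l then L.T (A i k * mRest L Boff Bdiag k l * L.w (A i l)) else 0)
      + ∑ k : Fin n, L.act (A i k) (Bdiag k)

lemma HermitianMackey.w_sum (L : HermitianMackey U F) {ι : Type*} (s : Finset ι) (f : ι → U) :
    L.w (∑ x ∈ s, f x) = ∑ x ∈ s, L.w (f x) :=
  map_sum (AddMonoidHom.mk' L.w L.w_add) f s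

lemma HermitianMackey.R_sum (L : HermitianMackey U F) {ι : Type*} (s : Finset ι) (f : ι → F) :
    L.R (∑ x ∈ s, f x) = ∑ x ∈ s, L.R (f x) :=
  map_sum (AddMonoidHom.mk' L.R L.R_add) f s

lemma HermitianMackey.R_zero (L : HermitianMackey U F) : L.R 0 = 0 :=
  (AddMonoidHom.mk' L.R L.R_add).map_zero

lemma HermitianMackey.mRest_symm (L : HermitianMackey U F) {n : ℕ}
    (Boff : Fin n → Fin n → U) (Bdiag : Fin n → F) (k l : Fin n) :
    L.w (mRest L Boff Bdiag l k) = mRest L Boff Bdiag k l := by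
  simp only [mRest, Matrix.of_apply]
  rcases lt_trichotomy k l with h | h | h
  · simp [h, h.asymm, L.w_invol]
  · subst h; simp [lt_irrefl, L.R_equiv]
  · simp [h, h.asymm]

lemma HM.split_sum {M : Type*} [AddCommMonoid M] {n : ℕ} (g : Fin n → Fin n → M) :
    ∑ k : Fin n, ∑ l : Fin n, g k l =
      ((∑ k : Fin n, ∑ l : Fin n, if k < l then g k l else 0)
        + ∑ k : Fin n, ∑ l : Fin n, if l < k then g k l else 0)
      + ∑ k : Fin n, g k k := by
  have h : ∀ k l : Fin n, g k l =
      (if k < l then g k l else 0) + (if l < k then g k l else 0)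
        + (if k = l then g k l else 0) := by
    intro k l
    rcases lt_trichotomy k l with h | h | h
    · simp [h, h.asymm, h.ne]
    · subst h; simp [lt_irrefl]
    · simp [h, h.asymm, h.ne']
  calc ∑ k : Fin n, ∑ l : Fin n, g k l
      = ∑ k : Fin n, ∑ l : Fin n,
          ((if k < l then g k l else 0) + (if l < k then g k l else 0)
            + (if k = l then g k l else 0)) := by
        exact Finset.sum_congr rfl fun k _ => Finset.sum_congr rfl fun l _ => h k l
    _ = _ := by
        simp [Finset.sum_add_distrib, Finset.sum_ite_eq]

/-- compatibility of the matrix action with the restriction: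
`R(A • B) = A · R(B) · w(A)` in `Mₙ(L(ℤ/2))`. -/
theorem matrix_action_restriction {U F : Type} [Ring U] [AddCommGroup F]
    (L : HermitianMackey U F) (n : ℕ)
    (A : Matrix (Fin n) (Fin n) U)
    (Boff : Fin n → Fin n → U) (Bdiag : Fin n → F) (i j : Fin n) :
    mRest L (mActOff L A Boff Bdiag) (mActDiag L A Boff Bdiag) i j =
      (A * mRest L Boff Bdiag * conjT L A) i j := by
  have hprod : ∀ p q : Fin n, (A * mRest L Boff Bdiag * conjT L A) p q =
      ∑ x : Fin n, ∑ y : Fin n,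
        A p y * mRest L Boff Bdiag y x * L.w (A q x) := by
    intro p q
    simp [Matrix.mul_apply, conjT, Finset.sum_mul]
  rw [mRest]
  simp only [Matrix.of_apply]
  split_ifs with h1 h2
  · rfl
  · -- case j < i : show w of the (j,i)-entry equals the (i,j)-entry
    show L.w ((A * mRest L Boff Bdiag * conjT L A) j i) = _
    rw [hprod j i, hprod i j, L.w_sum]
    rw [Finset.sum_comm]
    refine Finset.sum_congr rfl fun x _ => ?_
    rw [L.w_sum]
    refine Finset.sum_congr rfl fun y _ => ?_
    rw [L.w_mul, L.w_mul, L.w_invol, L.mRest_symm, mul_assoc]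
  · -- diagonal case: i = j
    have hij : i = j := le_antisymm (not_lt.mp h2) (not_lt.mp h1)
    subst hij
    show L.R (mActDiag L A Boff Bdiag i) = _
    rw [hprod i i, Finset.sum_comm]
    rw [HM.split_sum (fun k l => A i k * mRest L Boff Bdiag k l * L.w (A i l))]
    simp only [mActDiag]
    rw [L.R_add, L.R_sum, L.R_sum]
    congr 1
    · -- the T-part gives the two off-diagonal sums
      have hc : (∑ k : Fin n, ∑ l : Fin n,
            if l < k then A i k * mRest L Boff Bdiag k l * L.w (A i l) else 0)
          = ∑ k : Fin n, ∑ l : Fin n,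
            if k < l then A i l * mRest L Boff Bdiag l k * L.w (A i k) else 0 :=
        Finset.sum_comm
      rw [hc, ← Finset.sum_add_distrib]
      refine Finset.sum_congr rfl fun k _ => ?_
      rw [L.R_sum, ← Finset.sum_add_distrib]
      refine Finset.sum_congr rfl fun l _ => ?_
      by_cases h : k < l
      · have hw : L.w (A i k * mRest L Boff Bdiag k l * L.w (A i l))
            = A i l * mRest L Boff Bdiag l k * L.w (A i k) := by
          rw [L.w_mul, L.w_mul, L.w_invol, L.mRest_symm, mul_assoc]
        simp [h, L.RT, hw]
      · simp [h, L.R_zero]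
    · -- the act-part gives the diagonal sum
      refine Finset.sum_congr rfl fun k _ => ?_
      rw [L.R_act]
      congr 1
      simp [mRest, lt_irrefl]
end

section
/- Let L be a Hermitian Mackey functor and Mₙ(L) the matrix Hermitian Mackey functor. The action is compatible with the transfer: for all A, C ∈ Mₙ(L(ℤ/2)), A•T(C) = T(A·C·w(A)), where T: Mₙ(L(ℤ/2)) → Mₙ(L)(*) is the matrix transfer T(C)ᵢⱼ = Cᵢⱼ + w(Cⱼᵢ) for i<j and T(Cᵢᵢ) on the diagonal, and w(A) is the conjugate transpose. -/
variable {U F : Type} [Ring U] [AddCommGroup F]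

section Aux

variable {U F : Type} [Ring U] [AddCommGroup F]

/-- `T` as an additive homomorphism. -/
def Thom (L : HermitianMackey U F) : U →+ F := AddMonoidHom.mk' L.T L.T_add

/-- `w` as an additive homomorphism. -/
def whom (L : HermitianMackey U F) : U →+ U := AddMonoidHom.mk' L.w L.w_add

lemma conjT_mul (L : HermitianMackey U F) {n : ℕ} (X Y : Matrix (Fin n) (Fin n) U) :
    conjT L (X * Y) = conjT L Y * conjT L X := by
  funext i j
  simp only [conjT, Matrix.of_apply, Matrix.mul_apply]
  rw [show (∀ a, L.w a = whom L a) from fun a => rfl, map_sum]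
  simp only [show (∀ a, whom L a = L.w a) from fun a => rfl, L.w_mul]

lemma conjT_conjT (L : HermitianMackey U F) {n : ℕ} (A : Matrix (Fin n) (Fin n) U) :
    conjT L (conjT L A) = A := by
  funext i j
  simp [conjT, L.w_invol]

lemma restTrans (L : HermitianMackey U F) {n : ℕ} (C : Matrix (Fin n) (Fin n) U) :
    mRest L (mTransOff L C) (mTransDiag L C) = C + conjT L C := by
  funext i j
  simp only [mRest, mTransOff, mTransDiag, conjT, Matrix.add_apply, Matrix.of_apply]
  rcases lt_trichotomy i j with h | h | h
  · simp [h]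
  · subst h
    simp [lt_irrefl, L.RT]
  · simp [h, h.asymm, L.w_add, L.w_invol, add_comm]

lemma tri_sum {M : Type} [AddCommMonoid M] {n : ℕ} (f : Fin n → Fin n → M) :
    (∑ k : Fin n, ∑ l : Fin n, if k < l then f k l + f l k else 0)
      + ∑ k : Fin n, f k k
      = ∑ k : Fin n, ∑ l : Fin n, f k l := by
  have h1 : ∀ k l : Fin n, f k l =
      (if k < l then f k l else 0) + (if l < k then f k l else 0)
        + (if k = l then f k l else 0) := by
    intro k l
    rcases lt_trichotomy k l with h | h | h
    · simp [h, h.asymm, h.ne]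
    · subst h; simp [lt_irrefl]
    · simp [h, h.asymm, h.ne']
  have h2 : ∀ (p : Prop) [Decidable p] (a b : M),
      (if p then a + b else 0) = (if p then a else 0) + (if p then b else 0) := by
    intro p _ a b; split_ifs <;> simp
  calc (∑ k : Fin n, ∑ l : Fin n, if k < l then f k l + f l k else 0)
        + ∑ k : Fin n, f k k
      = ((∑ k : Fin n, ∑ l : Fin n, if k < l then f k l else 0)
          + ∑ k : Fin n, ∑ l : Fin n, if k < l then f l k else 0)
          + ∑ k : Fin n, f k k := by
        simp_rw [h2, Finset.sum_add_distrib]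
    _ = ((∑ k : Fin n, ∑ l : Fin n, if k < l then f k l else 0)
          + ∑ k : Fin n, ∑ l : Fin n, if l < k then f k l else 0)
          + ∑ k : Fin n, ∑ l : Fin n, if k = l then f k l else 0 := by
        congr 1
        · congr 1
          exact Finset.sum_comm
        · simp
    _ = ∑ k : Fin n, ∑ l : Fin n, f k l := by
        simp_rw [← Finset.sum_add_distrib]
        exact Finset.sum_congr rfl fun k _ => Finset.sum_congr rfl fun l _ => (h1 k l).symm

end Aux

/-- compatibility of the matrix action with the transfer:
`A • T(C) = T(A · C · w(A))`. -/
theorem matrix_action_transfer {U F : Type} [Ring U] [AddCommGroup F]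
    (L : HermitianMackey U F) (n : ℕ)
    (A C : Matrix (Fin n) (Fin n) U) :
    (∀ i j : Fin n, i < j →
        mActOff L A (mTransOff L C) (mTransDiag L C) i j =
          mTransOff L (A * C * conjT L A) i j) ∧
    (∀ i : Fin n,
        mActDiag L A (mTransOff L C) (mTransDiag L C) i =
          mTransDiag L (A * C * conjT L A) i) := by
  constructor
  · intro i j hij
    have key : (A * conjT L C * conjT L A) i j = L.w ((A * C * conjT L A) j i) := by
      have : conjT L (A * C * conjT L A) = A * conjT L C * conjT L A := by
        rw [conjT_mul, conjT_mul, conjT_conjT, Matrix.mul_assoc]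
      have h2 := congrArg (fun M => M i j) this
      simpa [conjT] using h2.symm
    simp only [mActOff, mTransOff, restTrans, Matrix.mul_add, Matrix.add_mul,
      Matrix.add_apply]
    rw [key]
  · intro i
    simp only [mActDiag, mTransDiag, restTrans, Matrix.add_apply]
    have hact : ∀ k : Fin n, L.act (A i k) (L.T (C k k)) =
        L.T (A i k * C k k * L.w (A i k)) := fun k => L.act_T _ _
    have hsplit : ∀ k l : Fin n,
        L.T (A i k * (C k l + conjT L C k l) * L.w (A i l)) =
          L.T (A i k * C k l * L.w (A i l)) + L.T (A i l * C l k * L.w (A i k)) := by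
      intro k l
      rw [mul_add, add_mul, L.T_add]
      congr 1
      rw [← L.T_equiv (A i k * conjT L C k l * L.w (A i l))]
      congr 1
      simp only [conjT, Matrix.of_apply]
      rw [L.w_mul, L.w_mul, L.w_invol, L.w_invol, mul_assoc]
    have hrw : (∑ k : Fin n, ∑ l : Fin n,
        if k < l then L.T (A i k * (C k l + conjT L C k l) * L.w (A i l)) else 0)
        = ∑ k : Fin n, ∑ l : Fin n,
        if k < l then L.T (A i k * C k l * L.w (A i l))
          + L.T (A i l * C l k * L.w (A i k)) else 0 := by
      refine Finset.sum_congr rfl fun k _ => Finset.sum_congr rfl fun l _ => ?_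
      split_ifs with h
      · rw [hsplit]
      · rfl
    rw [hrw]
    simp only [hact]
    rw [tri_sum (fun k l => L.T (A i k * C k l * L.w (A i l)))]
    rw [Finset.sum_comm]
    rw [show (∀ a, L.T a = Thom L a) from fun a => rfl, Matrix.mul_apply, map_sum]
    refine Finset.sum_congr rfl fun l _ => ?_
    rw [Matrix.mul_apply, Finset.sum_mul, map_sum]
    rfl
end
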